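/- For the action of τ on the affine root lattice V of type Ã_{n−1}: τ(δ) = δ, and τ(α_1 + α_2 + ⋯ + α_{n−1}) = 2δ + α_{n−1}. -/

import Mathlib

/-! Statement 10: for the action of `τ` on the affine root lattice of type `Ã_{n-1}`:
`τ(δ) = δ` and `τ(α_1 + ⋯ + α_{n-1}) = 2δ + α_{n-1}`. -/

/-- The affine root lattice `V = ℤ × (Fin n → ℤ)` of type `Ã_{n-1}`; the first
coordinate records the coefficient of the basic imaginary root `δ`. -/
abbrev V (n : ℕ) : Type := ℤ × (Fin n → ℤ)

/-- The basic imaginary root `δ = (1, 0)`. -/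
def deltaV (n : ℕ) : V n := (1, 0)

/-- The index preceding `i` cyclically (i.e. `i - 1 mod n`). -/
def prevIdx {n : ℕ} (i : Fin n) : Fin n := ⟨((i : ℕ) + (n - 1)) % n, Nat.mod_lt _ i.pos⟩

/-- The simple roots, indexed `0`-based by `Fin n`: writing `f_0, …, f_{n-1}` for the
standard basis of `Fin n → ℤ` (so `e_k = f_{k-1}` in the paper's `1`-based notation),
`alphaV i = α_i = (0, e_i − e_{i+1}) = (0, f_{i-1} − f_i)` for `1 ≤ i ≤ n-1`, and
`alphaV 0 = α_0 = (1, e_n − e_1) = (1, f_{n-1} − f_0)`. -/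
def alphaV {n : ℕ} (i : Fin n) : V n :=
  (if (i : ℕ) = 0 then 1 else 0, Pi.single (prevIdx i) 1 - Pi.single i 1)

/-- The pairing of `x ∈ V` with the coroot `α_i^∨`:
`⟨(r,v), α_i^∨⟩ = v_i − v_{i+1}` for `1 ≤ i ≤ n-1` and `⟨(r,v), α_0^∨⟩ = v_n − v_1`
(in the paper's `1`-based notation). -/
def coroot {n : ℕ} (i : Fin n) (x : V n) : ℤ := x.2 (prevIdx i) - x.2 i

/-- The reflection `s_i : V → V`, `s_i(x) = x − ⟨x, α_i^∨⟩·α_i`. -/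
def sV {n : ℕ} (i : Fin n) (x : V n) : V n := x - coroot i x • alphaV i

/-- `τ = s_{n-1}∘s_{n-2}∘⋯∘s_1∘s_0` acting on `V` (the `foldl` applies `s_0` first). -/
def tauV (n : ℕ) : V n → V n := fun x => (List.finRange n).foldl (fun y i => sV i y) x

/-- `κ = τ^{n-1}` acting on `V`. -/
def kappaV (n : ℕ) : V n → V n := (tauV n)^[n - 1]

lemma foldl_finRange_eq {α : Type*} (n : ℕ) (f : α → Fin n → α) (A : ℕ → α)
    (h : ∀ k (hk : k < n), f (A k) ⟨k, hk⟩ = A (k + 1)) :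
    (List.finRange n).foldl f (A 0) = A n := by
  suffices H : ∀ m k, k + m = n → ((List.finRange n).drop k).foldl f (A k) = A n by
    simpa using H n 0 (by omega)
  intro m
  induction m with
  | zero =>
    intro k hk
    have : k = n := by omega
    subst this
    simp [List.drop_eq_nil_of_le]
  | succ m ih =>
    intro k hk
    have hk' : k < n := by omega
    rw [List.drop_eq_getElem_cons (by simpa using hk'), List.foldl_cons]
    have hg : (List.finRange n)[k]'(by simpa using hk') = (⟨k, hk'⟩ : Fin n) := by
      ext; simp
    rw [hg, h k hk']
    exact ih (k + 1) (by omega)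

lemma prevIdx_val {n : ℕ} (i : Fin n) :
    (prevIdx i).val = if i.val = 0 then n - 1 else i.val - 1 := by
  have hn : 0 < n := i.pos
  unfold prevIdx
  simp only [Fin.val_mk]
  rcases Nat.eq_zero_or_pos i.val with h | h
  · rw [if_pos h, h]
    simp [Nat.mod_eq_of_lt (by omega : n - 1 < n)]
  · rw [if_neg (by omega)]
    have : (i : ℕ) + (n - 1) = (i.val - 1) + n := by omega
    rw [this, Nat.add_mod_right, Nat.mod_eq_of_lt (by omega : i.val - 1 < n)]

lemma sV_apply {n : ℕ} (i : Fin n) (r : ℤ) (v : Fin n → ℤ) :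
    sV i (r, v) =
      (r - (v (prevIdx i) - v i) * (if (i : ℕ) = 0 then 1 else 0),
        v - (v (prevIdx i) - v i) • (Pi.single (prevIdx i) 1 - Pi.single i 1)) := by
  rfl

lemma sub_one_lt_of_three_le {n : ℕ} (hn : 3 ≤ n) : n - 1 < n := by omega

/-- intermediate states of the foldl computing `τ(α_1 + ⋯ + α_{n-1})` -/
def B (n : ℕ) (hn : 3 ≤ n) (k : ℕ) : V n :=
  if k = 0 then
    (0, Pi.single (⟨0, by omega⟩ : Fin n) 1 - Pi.single (⟨n - 1, sub_one_lt_of_three_le hn⟩ : Fin n) 1)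
  else if k ≤ n - 1 then
    (2, Pi.single (⟨n - 1, sub_one_lt_of_three_le hn⟩ : Fin n) 1 -
      Pi.single (⟨(k - 1) % n, Nat.mod_lt _ (by omega)⟩ : Fin n) 1)
  else
    (2, Pi.single (⟨n - 2, by omega⟩ : Fin n) 1 - Pi.single (⟨n - 1, sub_one_lt_of_three_le hn⟩ : Fin n) 1)

lemma B_zero {n : ℕ} (hn : 3 ≤ n) :
    B n hn 0 =
      (0, Pi.single (⟨0, by omega⟩ : Fin n) 1 - Pi.single (⟨n - 1, sub_one_lt_of_three_le hn⟩ : Fin n) 1) := by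
  simp [B]

lemma B_mid {n : ℕ} (hn : 3 ≤ n) (k : ℕ) (h1 : 1 ≤ k) (h2 : k ≤ n - 1) :
    B n hn k =
      (2, Pi.single (⟨n - 1, sub_one_lt_of_three_le hn⟩ : Fin n) 1 -
        Pi.single (⟨k - 1, by omega⟩ : Fin n) 1) := by
  rw [B, if_neg (by omega), if_pos h2]
  have : (⟨(k - 1) % n, Nat.mod_lt _ (by omega)⟩ : Fin n) = (⟨k - 1, by omega⟩ : Fin n) := by
    ext
    simp [Nat.mod_eq_of_lt (by omega : k - 1 < n)]
  rw [this]

lemma B_last {n : ℕ} (hn : 3 ≤ n) :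
    B n hn n =
      (2, Pi.single (⟨n - 2, by omega⟩ : Fin n) 1 -
        Pi.single (⟨n - 1, sub_one_lt_of_three_le hn⟩ : Fin n) 1) := by
  rw [B, if_neg (by omega), if_neg (by omega)]

lemma B_step {n : ℕ} (hn : 3 ≤ n) (k : ℕ) (hk : k < n) :
    sV (⟨k, hk⟩ : Fin n) (B n hn k) = B n hn (k + 1) := by
  rcases Nat.lt_or_ge k 1 with h0 | h1
  · -- k = 0
    have hk0 : k = 0 := by omega
    subst hk0
    have hprev : (prevIdx (⟨0, hk⟩ : Fin n)).val = n - 1 := by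
      rw [prevIdx_val]; simp
    rw [B_zero hn, B_mid hn 1 le_rfl (by omega), sV_apply]
    apply Prod.ext
    · simp only [Pi.sub_apply, Pi.single_apply, Fin.ext_iff, Fin.val_mk, hprev]
      split_ifs <;> omega
    · simp only
      funext j
      simp only [Pi.sub_apply, Pi.smul_apply, Pi.single_apply, Fin.ext_iff, Fin.val_mk,
        hprev, smul_eq_mul]
      split_ifs <;> omega
  · rcases Nat.lt_or_ge k (n - 1) with h2 | h2
    · -- 1 ≤ k ≤ n - 2
      have hprev : (prevIdx (⟨k, hk⟩ : Fin n)).val = k - 1 := by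
        rw [prevIdx_val]; simp only [Fin.val_mk]; rw [if_neg (by omega)]
      rw [B_mid hn k h1 (by omega), B_mid hn (k + 1) (by omega) (by omega), sV_apply]
      apply Prod.ext
      · simp only [Fin.val_mk]
        rw [if_neg (by omega)]
        ring
      · simp only
        funext j
        simp only [Pi.sub_apply, Pi.smul_apply, Pi.single_apply, Fin.ext_iff, Fin.val_mk,
          hprev, smul_eq_mul]
        split_ifs <;> omega
    · -- k = n - 1
      have hk1 : k = n - 1 := by omega
      subst hk1
      have hprev : (prevIdx (⟨n - 1, hk⟩ : Fin n)).val = n - 2 := by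
        rw [prevIdx_val]; simp only [Fin.val_mk]; rw [if_neg (by omega)]; omega
      rw [B_mid hn (n - 1) (by omega) le_rfl, show n - 1 + 1 = n by omega, B_last hn, sV_apply]
      apply Prod.ext
      · simp only [Fin.val_mk]
        rw [if_neg (by omega)]
        ring
      · simp only
        funext j
        simp only [Pi.sub_apply, Pi.smul_apply, Pi.single_apply, Fin.ext_iff, Fin.val_mk,
          hprev, smul_eq_mul]
        split_ifs <;> omega

lemma sV_delta {n : ℕ} (i : Fin n) : sV i (deltaV n) = deltaV n := by
  simp [sV, coroot, deltaV]

lemma tau_delta {n : ℕ} (hn : 3 ≤ n) : tauV n (deltaV n) = deltaV n := by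
  have := foldl_finRange_eq n (fun y i => sV i y) (fun _ => deltaV n)
    (fun k hk => sV_delta _)
  simpa [tauV] using this

lemma sum_alpha {n : ℕ} (hn : 3 ≤ n) :
    (∑ i ∈ Finset.univ.filter (fun i : Fin n => 1 ≤ (i : ℕ)), alphaV i) = B n hn 0 := by
  rw [B_zero hn]
  apply Prod.ext
  · rw [Prod.fst_sum]
    simp only
    rw [Finset.sum_eq_zero]
    intro i hi
    rw [Finset.mem_filter] at hi
    obtain ⟨-, hi⟩ := hi
    simp only [alphaV]
    rw [if_neg (by omega)]
  · rw [Prod.snd_sum]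
    funext j
    rw [Finset.sum_apply]
    have hj : j.val < n := j.isLt
    have hmod : (j.val + 1) % n = if j.val = n - 1 then 0 else j.val + 1 := by
      split_ifs with h
      · rw [h, show n - 1 + 1 = n by omega, Nat.mod_self]
      · exact Nat.mod_eq_of_lt (by omega)
    have key : ∀ i ∈ Finset.univ.filter (fun i : Fin n => 1 ≤ (i : ℕ)),
        (alphaV i).2 j =
          (if i = (⟨(j.val + 1) % n, Nat.mod_lt _ (by omega)⟩ : Fin n) then (1:ℤ) else 0)
            - (if i = j then (1:ℤ) else 0) := by
      intro i hi
      rw [Finset.mem_filter] at hi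
      obtain ⟨-, hi⟩ := hi
      have hprev := prevIdx_val i
      simp only [alphaV, Pi.sub_apply, Pi.single_apply]
      have h1 : (j = prevIdx i) ↔ (i = (⟨(j.val + 1) % n, Nat.mod_lt _ (by omega)⟩ : Fin n)) := by
        rw [Fin.ext_iff, Fin.ext_iff, hprev]
        simp only [Fin.val_mk]
        rw [hmod, if_neg (by omega)]
        constructor
        · intro h; split_ifs with h' <;> omega
        · intro h; split_ifs at h with h' <;> omega
      congr 1
      · exact if_congr h1 rfl rfl
      · exact if_congr eq_comm rfl rfl
    rw [Finset.sum_congr rfl key, Finset.sum_sub_distrib]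
    rw [Finset.sum_ite_eq' _ _ (fun _ => (1:ℤ)), Finset.sum_ite_eq' _ _ (fun _ => (1:ℤ))]
    have hmem1 : ((⟨(j.val + 1) % n, Nat.mod_lt _ (by omega : 0 < n)⟩ : Fin n)
        ∈ Finset.univ.filter (fun i : Fin n => 1 ≤ (i : ℕ))) ↔ ¬ (j.val = n - 1) := by
      simp only [Finset.mem_filter, Finset.mem_univ, true_and, Fin.val_mk]
      rw [hmod]
      split_ifs with h <;> constructor <;> omega
    have hmem2 : (j ∈ Finset.univ.filter (fun i : Fin n => 1 ≤ (i : ℕ))) ↔ 1 ≤ j.val := by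
      simp
    simp only [Pi.sub_apply, Pi.single_apply, Fin.ext_iff, Fin.val_mk]
    simp only [hmem1, hmem2]
    split_ifs <;> omega

/-- `τ(δ) = δ` and `τ(α_1 + α_2 + ⋯ + α_{n-1}) = 2δ + α_{n-1}`. -/
theorem stmt10 {n : ℕ} (hn : 3 ≤ n) :
    tauV n (deltaV n) = deltaV n ∧
      tauV n (∑ i ∈ Finset.univ.filter (fun i : Fin n => 1 ≤ (i : ℕ)), alphaV i)
        = (2 : ℤ) • deltaV n + alphaV (⟨n - 1, by omega⟩ : Fin n) := by
  refine ⟨tau_delta hn, ?_⟩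
  rw [sum_alpha hn]
  have := foldl_finRange_eq n (fun y i => sV i y) (B n hn) (fun k hk => B_step hn k hk)
  rw [show tauV n (B n hn 0) = (List.finRange n).foldl (fun y i => sV i y) (B n hn 0) from rfl,
    this, B_last hn]
  apply Prod.ext
  · simp [deltaV, alphaV]
    omega
  · simp only [deltaV, alphaV, Prod.snd_add, Prod.smul_snd]
    funext j
    simp only [Pi.add_apply, Pi.smul_apply, Pi.sub_apply, Pi.single_apply, Pi.zero_apply,
      Fin.ext_iff, Fin.val_mk, prevIdx_val, smul_eq_mul]
    split_ifs <;> omega
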